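/- If a, b ∈ ℤ² are lattice points such that the triangle with vertices 0, a, b contains no lattice point other than its three vertices, then the area of this triangle equals 1/2, i.e., |det(a,b)| = 1. -/

import Mathlib

private lemma hull3 {A B : ℝ × ℝ} {u v : ℝ} (hu : 0 ≤ u) (hv : 0 ≤ v) (huv : u + v ≤ 1) :
    (u • A + v • B) ∈ convexHull ℝ ({((0 : ℝ), (0 : ℝ)), A, B} : Set (ℝ × ℝ)) := by
  have hO : ((0 : ℝ), (0 : ℝ)) ∈ convexHull ℝ ({((0 : ℝ), (0 : ℝ)), A, B} : Set (ℝ × ℝ)) :=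
    subset_convexHull ℝ _ (by simp)
  have hA : A ∈ convexHull ℝ ({((0 : ℝ), (0 : ℝ)), A, B} : Set (ℝ × ℝ)) :=
    subset_convexHull ℝ _ (by simp)
  have hB : B ∈ convexHull ℝ ({((0 : ℝ), (0 : ℝ)), A, B} : Set (ℝ × ℝ)) :=
    subset_convexHull ℝ _ (by simp)
  have hO0 : ((0 : ℝ), (0 : ℝ)) = (0 : ℝ × ℝ) := rfl
  rcases eq_or_lt_of_le (add_nonneg hu hv) with h0 | h0
  · have hu0 : u = 0 := by linarith
    have hv0 : v = 0 := by linarith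
    simpa [hu0, hv0, hO0] using hO
  · set w := u + v with hw
    have hw0 : w ≠ 0 := by linarith
    have hsum : u / w + v / w = 1 := by
      rw [← add_div, ← hw]; exact div_self hw0
    have hz : (u / w) • A + (v / w) • B ∈ convexHull ℝ
        ({((0 : ℝ), (0 : ℝ)), A, B} : Set (ℝ × ℝ)) :=
      convex_convexHull ℝ _ hA hB (by positivity) (by positivity) hsum
    have hmem := convex_convexHull ℝ _ hO hz (a := 1 - w) (b := w) (by linarith) (by linarith)
      (by ring)
    have heq : (1 - w) • ((0 : ℝ), (0 : ℝ)) + w • ((u / w) • A + (v / w) • B)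
        = u • A + v • B := by
      rw [hO0, smul_zero, zero_add, smul_add, smul_smul, smul_smul,
        mul_div_cancel₀ _ hw0, mul_div_cancel₀ _ hw0]
    rw [heq] at hmem
    exact hmem

private lemma indep {a b : ℤ × ℤ} (hnd : a.1 * b.2 - a.2 * b.1 ≠ 0) {x y : ℚ}
    (h1 : x * a.1 + y * b.1 = 0) (h2 : x * a.2 + y * b.2 = 0) : x = 0 ∧ y = 0 := by
  have hd : ((a.1 * b.2 - a.2 * b.1 : ℤ) : ℚ) ≠ 0 := by exact_mod_cast hnd
  have hx : x * ((a.1 * b.2 - a.2 * b.1 : ℤ) : ℚ) = 0 := by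
    push_cast; linear_combination (b.2 : ℚ) * h1 - (b.1 : ℚ) * h2
  have hy : y * ((a.1 * b.2 - a.2 * b.1 : ℤ) : ℚ) = 0 := by
    push_cast; linear_combination (a.1 : ℚ) * h2 - (a.2 : ℚ) * h1
  exact ⟨(mul_eq_zero.mp hx).resolve_right hd, (mul_eq_zero.mp hy).resolve_right hd⟩

private lemma final (a b : ℤ × ℤ)
    (hnd : a.1 * b.2 - a.2 * b.1 ≠ 0)
    (hempty : ∀ p : ℤ × ℤ,
      ((p.1 : ℝ), (p.2 : ℝ)) ∈
        convexHull ℝ ({((0 : ℝ), (0 : ℝ)), ((a.1 : ℝ), (a.2 : ℝ)),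
          ((b.1 : ℝ), (b.2 : ℝ))} : Set (ℝ × ℝ)) →
      p = (0, 0) ∨ p = a ∨ p = b)
    (r : ℤ × ℤ) (u v : ℚ)
    (h1 : (r.1 : ℚ) = u * a.1 + v * b.1) (h2 : (r.2 : ℚ) = u * a.2 + v * b.2)
    (hu : 0 ≤ u) (hv : 0 ≤ v) (huv : u + v ≤ 1)
    (h00 : ¬(u = 0 ∧ v = 0)) (h10 : ¬(u = 1 ∧ v = 0)) (h01 : ¬(u = 0 ∧ v = 1)) : False := by
  have hmem : ((r.1 : ℝ), (r.2 : ℝ)) ∈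
      convexHull ℝ ({((0 : ℝ), (0 : ℝ)), ((a.1 : ℝ), (a.2 : ℝ)),
        ((b.1 : ℝ), (b.2 : ℝ))} : Set (ℝ × ℝ)) := by
    have h1' : (r.1 : ℝ) = (u : ℝ) * a.1 + (v : ℝ) * b.1 := by exact_mod_cast h1
    have h2' : (r.2 : ℝ) = (u : ℝ) * a.2 + (v : ℝ) * b.2 := by exact_mod_cast h2
    have heq : ((r.1 : ℝ), (r.2 : ℝ))
        = (u : ℝ) • (((a.1 : ℝ)), ((a.2 : ℝ))) + (v : ℝ) • (((b.1 : ℝ)), ((b.2 : ℝ))) := by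
      simp [Prod.ext_iff, Prod.smul_def, h1', h2']
    rw [heq]
    exact hull3 (by exact_mod_cast hu) (by exact_mod_cast hv) (by exact_mod_cast huv)
  rcases hempty r hmem with h | h | h
  · have c1 : r.1 = 0 := congrArg Prod.fst h
    have c2 : r.2 = 0 := congrArg Prod.snd h
    have e1 : u * a.1 + v * b.1 = 0 := by
      have : (r.1 : ℚ) = 0 := by exact_mod_cast c1
      linear_combination this - h1
    have e2 : u * a.2 + v * b.2 = 0 := by
      have : (r.2 : ℚ) = 0 := by exact_mod_cast c2
      linear_combination this - h2
    exact h00 (indep hnd e1 e2)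
  · have c1 : (r.1 : ℚ) = (a.1 : ℚ) := by exact_mod_cast congrArg Prod.fst h
    have c2 : (r.2 : ℚ) = (a.2 : ℚ) := by exact_mod_cast congrArg Prod.snd h
    have e1 : (u - 1) * a.1 + v * b.1 = 0 := by linear_combination c1 - h1
    have e2 : (u - 1) * a.2 + v * b.2 = 0 := by linear_combination c2 - h2
    obtain ⟨eu, ev⟩ := indep hnd e1 e2
    exact h10 ⟨by linarith, ev⟩
  · have c1 : (r.1 : ℚ) = (b.1 : ℚ) := by exact_mod_cast congrArg Prod.fst h
    have c2 : (r.2 : ℚ) = (b.2 : ℚ) := by exact_mod_cast congrArg Prod.snd h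
    have e1 : u * a.1 + (v - 1) * b.1 = 0 := by linear_combination c1 - h1
    have e2 : u * a.2 + (v - 1) * b.2 = 0 := by linear_combination c2 - h2
    obtain ⟨eu, ev⟩ := indep hnd e1 e2
    exact h01 ⟨eu, by linarith⟩

private lemma no_point (a b q : ℤ × ℤ)
    (hnd : a.1 * b.2 - a.2 * b.1 ≠ 0)
    (hempty : ∀ p : ℤ × ℤ,
      ((p.1 : ℝ), (p.2 : ℝ)) ∈
        convexHull ℝ ({((0 : ℝ), (0 : ℝ)), ((a.1 : ℝ), (a.2 : ℝ)),
          ((b.1 : ℝ), (b.2 : ℝ))} : Set (ℝ × ℝ)) →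
      p = (0, 0) ∨ p = a ∨ p = b)
    (hq : ¬ ((a.1 * b.2 - a.2 * b.1) ∣ (q.1 * b.2 - q.2 * b.1)) ∨
          ¬ ((a.1 * b.2 - a.2 * b.1) ∣ (a.1 * q.2 - a.2 * q.1))) : False := by
  have hd : ((a.1 * b.2 - a.2 * b.1 : ℤ) : ℚ) ≠ 0 := by exact_mod_cast hnd
  set s : ℚ := ((q.1 * b.2 - q.2 * b.1 : ℤ) : ℚ) / ((a.1 * b.2 - a.2 * b.1 : ℤ) : ℚ) with hs
  set t : ℚ := ((a.1 * q.2 - a.2 * q.1 : ℤ) : ℚ) / ((a.1 * b.2 - a.2 * b.1 : ℤ) : ℚ) with ht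
  have hnums : s * ((a.1 * b.2 - a.2 * b.1 : ℤ) : ℚ) = ((q.1 * b.2 - q.2 * b.1 : ℤ) : ℚ) := by
    rw [hs, div_mul_cancel₀ _ hd]
  have hnumt : t * ((a.1 * b.2 - a.2 * b.1 : ℤ) : ℚ) = ((a.1 * q.2 - a.2 * q.1 : ℤ) : ℚ) := by
    rw [ht, div_mul_cancel₀ _ hd]
  have hq1 : s * a.1 + t * b.1 = q.1 := by
    have h := hd
    rw [hs, ht, div_mul_eq_mul_div, div_mul_eq_mul_div, ← add_div, div_eq_iff h]
    push_cast; ring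
  have hq2 : s * a.2 + t * b.2 = q.2 := by
    have h := hd
    rw [hs, ht, div_mul_eq_mul_div, div_mul_eq_mul_div, ← add_div, div_eq_iff h]
    push_cast; ring
  have hst : Int.fract s ≠ 0 ∨ Int.fract t ≠ 0 := by
    rcases hq with hq | hq
    · left
      intro h0
      apply hq
      have hsz : s = (⌊s⌋ : ℚ) := by
        have := Int.fract_add_floor s; rw [h0] at this; simpa using this.symm
      refine ⟨⌊s⌋, ?_⟩
      have hc : ((q.1 * b.2 - q.2 * b.1 : ℤ) : ℚ)
          = ((a.1 * b.2 - a.2 * b.1 : ℤ) : ℚ) * (⌊s⌋ : ℚ) := by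
        linear_combination ((a.1 * b.2 - a.2 * b.1 : ℤ) : ℚ) * hsz - hnums
      exact_mod_cast hc
    · right
      intro h0
      apply hq
      have htz : t = (⌊t⌋ : ℚ) := by
        have := Int.fract_add_floor t; rw [h0] at this; simpa using this.symm
      refine ⟨⌊t⌋, ?_⟩
      have hc : ((a.1 * q.2 - a.2 * q.1 : ℤ) : ℚ)
          = ((a.1 * b.2 - a.2 * b.1 : ℤ) : ℚ) * (⌊t⌋ : ℚ) := by
        linear_combination ((a.1 * b.2 - a.2 * b.1 : ℤ) : ℚ) * htz - hnumt
      exact_mod_cast hc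
  have hp1 : ((q.1 - ⌊s⌋ * a.1 - ⌊t⌋ * b.1 : ℤ) : ℚ)
      = Int.fract s * a.1 + Int.fract t * b.1 := by
    simp only [Int.fract]
    push_cast
    linear_combination -hq1
  have hp2 : ((q.2 - ⌊s⌋ * a.2 - ⌊t⌋ * b.2 : ℤ) : ℚ)
      = Int.fract s * a.2 + Int.fract t * b.2 := by
    simp only [Int.fract]
    push_cast
    linear_combination -hq2
  have hs0 : 0 ≤ Int.fract s := Int.fract_nonneg s
  have hs1 : Int.fract s < 1 := Int.fract_lt_one s
  have ht0 : 0 ≤ Int.fract t := Int.fract_nonneg t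
  have ht1 : Int.fract t < 1 := Int.fract_lt_one t
  rcases le_or_gt (Int.fract s + Int.fract t) 1 with hle | hgt
  · refine final a b hnd hempty (q.1 - ⌊s⌋ * a.1 - ⌊t⌋ * b.1, q.2 - ⌊s⌋ * a.2 - ⌊t⌋ * b.2)
      (Int.fract s) (Int.fract t) hp1 hp2 hs0 ht0 hle ?_ ?_ ?_
    · rintro ⟨e1, e2⟩; rcases hst with h | h <;> [exact h e1; exact h e2]
    · rintro ⟨e1, _⟩; linarith
    · rintro ⟨_, e2⟩; linarith
  · have hr1 : ((a.1 + b.1 - (q.1 - ⌊s⌋ * a.1 - ⌊t⌋ * b.1) : ℤ) : ℚ)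
        = (1 - Int.fract s) * a.1 + (1 - Int.fract t) * b.1 := by
      simp only [Int.fract]
      push_cast
      linear_combination hq1
    have hr2 : ((a.2 + b.2 - (q.2 - ⌊s⌋ * a.2 - ⌊t⌋ * b.2) : ℤ) : ℚ)
        = (1 - Int.fract s) * a.2 + (1 - Int.fract t) * b.2 := by
      simp only [Int.fract]
      push_cast
      linear_combination hq2
    refine final a b hnd hempty
      (a.1 + b.1 - (q.1 - ⌊s⌋ * a.1 - ⌊t⌋ * b.1), a.2 + b.2 - (q.2 - ⌊s⌋ * a.2 - ⌊t⌋ * b.2))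
      (1 - Int.fract s) (1 - Int.fract t) hr1 hr2 (by linarith) (by linarith) (by linarith)
      ?_ ?_ ?_
    · rintro ⟨e1, _⟩; linarith
    · rintro ⟨_, e2⟩; linarith
    · rintro ⟨e1, _⟩; linarith

theorem det_eq_one_of_no_interior_lattice_point (a b : ℤ × ℤ)
    (hnd : a.1 * b.2 - a.2 * b.1 ≠ 0)
    (hempty : ∀ p : ℤ × ℤ,
      ((p.1 : ℝ), (p.2 : ℝ)) ∈
        convexHull ℝ ({((0 : ℝ), (0 : ℝ)), ((a.1 : ℝ), (a.2 : ℝ)),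
          ((b.1 : ℝ), (b.2 : ℝ))} : Set (ℝ × ℝ)) →
      p = (0, 0) ∨ p = a ∨ p = b) :
    |a.1 * b.2 - a.2 * b.1| = 1 := by
  set d := a.1 * b.2 - a.2 * b.1 with hdd
  by_contra hne
  have hb2 : d ∣ b.2 := by
    by_contra h
    exact no_point a b (1, 0) hnd hempty (Or.inl (by simpa using h))
  have ha2 : d ∣ a.2 := by
    by_contra h
    refine no_point a b (1, 0) hnd hempty (Or.inr ?_)
    simpa [dvd_neg] using h
  have hb1 : d ∣ b.1 := by
    by_contra h
    refine no_point a b (0, 1) hnd hempty (Or.inl ?_)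
    simpa [dvd_neg] using h
  have ha1 : d ∣ a.1 := by
    by_contra h
    exact no_point a b (0, 1) hnd hempty (Or.inr (by simpa using h))
  have hdd2 : d * d ∣ d := by
    rw [hdd]
    exact dvd_sub (mul_dvd_mul ha1 hb2) (mul_dvd_mul ha2 hb1)
  have habs : |d * d| ≤ |d| :=
    Int.le_of_dvd (abs_pos.mpr hnd) ((abs_dvd _ _).mpr ((dvd_abs _ _).mpr hdd2))
  rw [abs_mul] at habs
  have h1 : 1 ≤ |d| := Int.one_le_abs hnd
  have h2 : 2 ≤ |d| := by
    rcases lt_or_eq_of_le h1 with h | h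
    · exact h
    · exact absurd h.symm hne
  nlinarith
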